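/- arXiv:1402.4277 — 11 statements merged into one kernel-verified Lean document; each statement's English description precedes it below -/
import Mathlib

section
/- For every finite connected simple graph G = (V, E) and any two distinct vertices u, v ∈ V, the union of the connected component of u in G^(v) and the connected component of v in G^(u) equals V. -/
/-- The graph obtained from `G` by deleting all edges incident to `v`
(keeping all vertices). -/
def delV {V : Type*} (G : SimpleGraph V) (v : V) : SimpleGraph V where
  Adj a b := G.Adj a b ∧ a ≠ v ∧ b ≠ v
  symm := ⟨fun a b h => ⟨h.1.symm, h.2.2, h.2.1⟩⟩
  loopless := ⟨fun a h => G.loopless.irrefl a h.1⟩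

/-- `u` and `v` lie on a common cycle (circuit) of `G`. -/
def hasCommonCycle {V : Type*} (G : SimpleGraph V) (u v : V) : Prop :=
  ∃ (a : V) (c : G.Walk a a), c.IsCycle ∧ u ∈ c.support ∧ v ∈ c.support

lemma reachable_delV_of_walk {V : Type*} (G : SimpleGraph V) (w : V) :
    ∀ {a b : V} (p : G.Walk a b), w ∉ p.support → (delV G w).Reachable a b := by
  intro a b p
  induction p with
  | nil => intro _; rfl
  | cons h p ih =>
    rename_i x y z
    intro hw
    rw [SimpleGraph.Walk.support_cons] at hw
    simp only [List.mem_cons] at hw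
    push_neg at hw
    have hy : y ∈ p.support := p.start_mem_support
    have hadj : (delV G w).Adj x y := ⟨h, hw.1.symm, fun hyw => hw.2 (hyw ▸ hy)⟩
    exact hadj.reachable.trans (ih hw.2)

theorem union_components_eq_univ {V : Type*} [Fintype V] (G : SimpleGraph V)
    (hG : G.Connected) (u v : V) (huv : u ≠ v) :
    {x | (delV G v).Reachable u x} ∪ {x | (delV G u).Reachable v x} = (Set.univ : Set V) := by
  classical
  ext x
  simp only [Set.mem_union, Set.mem_setOf_eq, Set.mem_univ, iff_true]
  obtain ⟨w⟩ := hG u x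
  have hp := w.toPath.2
  set p : G.Walk u x := w.toPath.1 with hpdef
  by_cases hv : v ∈ p.support
  · right
    have hsupp : p.support = (p.takeUntil v hv).support ++ (p.dropUntil v hv).support.tail := by
      conv_lhs => rw [← p.take_spec hv]
      exact SimpleGraph.Walk.support_append _ _
    have hnd : p.support.Nodup := hp.support_nodup
    rw [hsupp] at hnd
    have hdisj := List.disjoint_of_nodup_append hnd
    have hu1 : u ∈ (p.takeUntil v hv).support := (p.takeUntil v hv).start_mem_support
    have hu2 : u ∉ (p.dropUntil v hv).support.tail := fun h => hdisj hu1 h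
    have hcount : u ∉ (p.dropUntil v hv).support := by
      rw [(p.dropUntil v hv).support_eq_cons]
      intro h
      rcases List.mem_cons.mp h with h | h
      · exact huv h
      · exact hu2 ((p.dropUntil v hv).support_eq_cons ▸ h)
    exact reachable_delV_of_walk G u (p.dropUntil v hv) hcount
  · left
    exact reachable_delV_of_walk G v p hv
end

section
/- Let P = (p_v)_{v ∈ V} be a compatible family of V-partitions. For any three distinct elements u, v, w ∈ V: p_w[u] ≠ p_w[v] if and only if p_w[u] is a proper subset of p_v[w]. -/
/-- A compatible family of `V`-partitions: for each `v ∈ V` a partition of `V`,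
recorded via its block function `blk v u` = the block of the partition `p_v`
containing `u`, such that `p_v[u] ∪ p_u[v] = V` for all distinct `u, v`, and
`{v} ∈ p_v` for all `v`. -/
structure CompFam (V : Type*) where
  blk : V → V → Set V
  mem_self : ∀ v u, u ∈ blk v u
  eq_of_mem : ∀ v u w, w ∈ blk v u → blk v w = blk v u
  self_blk : ∀ v, blk v v = {v}
  compat : ∀ u v : V, u ≠ v → blk v u ∪ blk u v = Set.univ

/-- The graph `B_P = (V, E_P)` associated to a compatible family `P`:
`{u,v} ∈ E_P` iff `p_w[u] = p_w[v]` for all `w ∈ V − {u,v}`. -/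
def BP {V : Type*} (P : CompFam V) : SimpleGraph V where
  Adj u v := u ≠ v ∧ ∀ w, w ≠ u → w ≠ v → P.blk w u = P.blk w v
  symm := ⟨fun u v h => ⟨h.1.symm, fun w h1 h2 => (h.2 w h2 h1).symm⟩⟩
  loopless := ⟨fun u h => h.1 rfl⟩

theorem sep_iff_ssubset {V : Type*} [Fintype V] (P : CompFam V) (u v w : V)
    (huv : u ≠ v) (huw : u ≠ w) (hvw : v ≠ w) :
    P.blk w u ≠ P.blk w v ↔ P.blk w u ⊂ P.blk v w := by
  constructor
  · intro hne
    have hdisj : ∀ x, x ∈ P.blk w u → x ∉ P.blk w v := by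
      intro x hx hx'
      exact hne ((P.eq_of_mem w u x hx).symm.trans (P.eq_of_mem w v x hx'))
    constructor
    · intro x hx
      have hxv : x ∉ P.blk w v := hdisj x hx
      have hc := P.compat v w hvw
      have hx2 : x ∈ P.blk w v ∪ P.blk v w := by rw [hc]; trivial
      rcases hx2 with h | h
      · exact absurd h hxv
      · exact h
    · intro hsub
      have hw : w ∈ P.blk w u := hsub (P.mem_self v w)
      have h1 : P.blk w w = P.blk w u := P.eq_of_mem w u w hw
      rw [P.self_blk] at h1
      have h2 : u ∈ ({w} : Set V) := h1 ▸ P.mem_self w u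
      exact huw (Set.mem_singleton_iff.mp h2)
  · intro hss heq
    have hv : v ∈ P.blk v w := by
      apply hss.1
      rw [heq]; exact P.mem_self w v
    have h1 : P.blk v v = P.blk v w := P.eq_of_mem v w v hv
    rw [P.self_blk] at h1
    have h2 : w ∈ ({v} : Set V) := h1 ▸ P.mem_self v w
    exact hvw (Set.mem_singleton_iff.mp h2).symm
end

section
/- Let P = (p_v)_{v ∈ V} be a compatible family of V-partitions. For any three distinct elements u, v, w ∈ V: p_w[u] ≠ p_w[v] if and only if p_w[u] ⊆ p_v[u], and this also holds if and only if p_w[u] is a proper subset of p_v[u]. -/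
private lemma CompFam.mem_symm {V : Type*} (P : CompFam V) {a b c : V}
    (h : c ∈ P.blk a b) : b ∈ P.blk a c := by
  rw [P.eq_of_mem a b c h]; exact P.mem_self a b

private lemma CompFam.mem_or {V : Type*} (P : CompFam V) {a b : V} (h : a ≠ b) (x : V) :
    x ∈ P.blk b a ∨ x ∈ P.blk a b := by
  have := P.compat a b h
  have : x ∈ P.blk b a ∪ P.blk a b := this ▸ Set.mem_univ x
  exact this

theorem sep_iff_subset_and_ssubset {V : Type*} [Fintype V] (P : CompFam V) (u v w : V)
    (huv : u ≠ v) (huw : u ≠ w) (hvw : v ≠ w) :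
    (P.blk w u ≠ P.blk w v ↔ P.blk w u ⊆ P.blk v u) ∧
    (P.blk w u ≠ P.blk w v ↔ P.blk w u ⊂ P.blk v u) := by
  -- reverse direction: subset implies the blocks differ
  have hrev : P.blk w u ⊆ P.blk v u → P.blk w u ≠ P.blk w v := by
    intro hsub heq
    have hv : v ∈ P.blk w u := heq ▸ P.mem_self w v
    have hv' : v ∈ P.blk v u := hsub hv
    have : P.blk v u = P.blk v v := (P.eq_of_mem v u v hv').symm
    rw [P.self_blk v] at this
    have : u ∈ ({v} : Set V) := this ▸ P.mem_self v u
    exact huv this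
  have hfwd : P.blk w u ≠ P.blk w v → P.blk w u ⊂ P.blk v u := by
    intro hne
    -- v ∉ blk w u
    have hvnot : v ∉ P.blk w u := fun h => hne (P.eq_of_mem w u v h).symm
    -- u ∉ blk w v
    have hunot : u ∉ P.blk w v := fun h => hne (P.eq_of_mem w v u h)
    constructor
    · intro x hx
      by_contra hxv
      -- x ≠ v
      have hxnev : x ≠ v := fun h => hvnot (h ▸ hx)
      -- x ∉ blk w v
      have hxwv : x ∉ P.blk w v := fun h => hne ((P.eq_of_mem w v x h) ▸ P.eq_of_mem w u x hx).symm
      -- so x ∈ blk v w by compat (v, w)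
      have hxvw : x ∈ P.blk v w := (P.mem_or hvw x).resolve_left hxwv
      -- u ∉ blk v x = blk v w
      have : u ∉ P.blk v w := by
        rw [← P.eq_of_mem v w x hxvw]
        exact fun h => hxv (P.mem_symm h)
      -- compat (w, v): u ∈ blk w v, contradiction
      have : u ∈ P.blk w v := (P.mem_or (Ne.symm hvw) u).resolve_left this
      exact hunot this
    · intro hsub
      -- show w ∈ blk v u \ blk w u
      have hwnot : w ∉ P.blk w u := by
        intro h
        have := P.eq_of_mem w u w h
        rw [P.self_blk w] at this
        have : u ∈ ({w} : Set V) := this ▸ P.mem_self w u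
        exact huw this
      have hwvu : w ∈ P.blk v u := by
        by_contra hw
        have : u ∉ P.blk v w := fun h => hw (P.mem_symm h)
        have : u ∈ P.blk w v := (P.mem_or (Ne.symm hvw) u).resolve_left this
        exact hunot this
      exact hwnot (hsub hwvu)
  exact ⟨⟨fun h => (hfwd h).subset, hrev⟩, ⟨hfwd, fun h => hrev h.subset⟩⟩
end

section
/- Let P = (p_v)_{v ∈ V} be a compatible family of V-partitions. For any three distinct elements u, v, w ∈ V: if p_w[u] ≠ p_w[v], then w ∈ p_v[u] ∩ p_u[v]. -/
theorem mem_inter_of_sep {V : Type*} [Fintype V] (P : CompFam V) (u v w : V)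
    (huv : u ≠ v) (huw : u ≠ w) (hvw : v ≠ w)
    (h : P.blk w u ≠ P.blk w v) :
    w ∈ P.blk v u ∩ P.blk u v := by
  have hu : u ∉ P.blk w v := fun hm => h (P.eq_of_mem w v u hm)
  have hv : v ∉ P.blk w u := fun hm => h (P.eq_of_mem w u v hm).symm
  constructor
  · -- compat w v : blk v w ∪ blk w v = univ
    have hc := P.compat w v hvw.symm
    have : u ∈ P.blk v w ∪ P.blk w v := hc ▸ Set.mem_univ u
    have hu' : u ∈ P.blk v w := this.resolve_right hu
    have := P.eq_of_mem v w u hu'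
    rw [this]
    exact P.mem_self v w
  · have hc := P.compat w u huw.symm
    have : v ∈ P.blk u w ∪ P.blk w u := hc ▸ Set.mem_univ v
    have hv' : v ∈ P.blk u w := this.resolve_right hv
    have := P.eq_of_mem u w v hv'
    rw [this]
    exact P.mem_self u w
end

section
/- Let P = (p_v)_{v ∈ V} be a compatible family of V-partitions. For any four elements u, u', v, v' ∈ V with u ≠ v and u' ≠ v', one has p_{v'}[u'] ⊆ p_v[u] if and only if p_v[u'] = p_v[u] and either v = v' or v' separates v and u' (i.e., v' ∉ {v, u'} and p_{v'}[v] ≠ p_{v'}[u']). -/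
theorem subset_iff_eq_and_sep {V : Type*} [Fintype V] (P : CompFam V) (u u' v v' : V)
    (huv : u ≠ v) (hu'v' : u' ≠ v') :
    P.blk v' u' ⊆ P.blk v u ↔
      (P.blk v u' = P.blk v u ∧
        (v = v' ∨ (v' ≠ v ∧ v' ≠ u' ∧ P.blk v' v ≠ P.blk v' u'))) := by
  have hv_not : v ∉ P.blk v u := by
    intro hv
    have := P.eq_of_mem v u v hv
    rw [P.self_blk] at this
    have hu : u ∈ ({v} : Set V) := this.symm ▸ P.mem_self v u
    exact huv hu
  constructor
  · intro hsub
    have hu'mem : u' ∈ P.blk v u := hsub (P.mem_self v' u')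
    refine ⟨P.eq_of_mem v u u' hu'mem, ?_⟩
    by_cases hvv' : v = v'
    · exact Or.inl hvv'
    · refine Or.inr ⟨Ne.symm hvv', hu'v'.symm, fun heq => ?_⟩
      exact hv_not (hsub (heq ▸ P.mem_self v' v))
  · rintro ⟨heq, hvv' | ⟨hv'v, hv'u', hne⟩⟩
    · subst hvv'; exact heq.subset
    · intro x hx
      have hxblk : P.blk v' x = P.blk v' u' := P.eq_of_mem v' u' x hx
      have hxv : x ∉ P.blk v' v := fun h =>
        hne ((P.eq_of_mem v' v x h).symm.trans hxblk)
      have hcompat := P.compat v v' hv'v.symm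
      have hx2 : x ∈ P.blk v v' := by
        have : x ∈ P.blk v' v ∪ P.blk v v' := hcompat ▸ Set.mem_univ x
        exact this.resolve_left hxv
      have hu'v : u' ∉ P.blk v' v := fun h =>
        hne ((P.eq_of_mem v' v u' h).symm.trans (P.eq_of_mem v' u' u' (P.mem_self v' u')))
      have hu'2 : u' ∈ P.blk v v' := by
        have : u' ∈ P.blk v' v ∪ P.blk v v' := hcompat ▸ Set.mem_univ u'
        exact this.resolve_left hu'v
      have : P.blk v x = P.blk v v' := P.eq_of_mem v v' x hx2
      rw [← heq, P.eq_of_mem v v' u' hu'2, ← this]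
      exact P.mem_self v x
end

section
/- Let P = (p_v)_{v ∈ V} be a compatible family of V-partitions and u, v distinct elements of V. Then {u, v} ∈ E_P (i.e., p_w[u] = p_w[v] holds for all w ∈ V − {u,v}) if and only if p_v[u] is a minimal element (with respect to inclusion) of the collection {p_w[u] : w ∈ V − {u}}. -/
theorem edge_iff_minimal {V : Type*} [Fintype V] (P : CompFam V) (u v : V) (huv : u ≠ v) :
    (∀ w : V, w ≠ u → w ≠ v → P.blk w u = P.blk w v) ↔
      (∀ w : V, w ≠ u → P.blk w u ⊆ P.blk v u → P.blk w u = P.blk v u) := by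
  constructor
  · intro h w hwu hsub
    by_cases hwv : w = v
    · subst hwv; rfl
    · exfalso
      have h1 : P.blk w u = P.blk w v := h w hwu hwv
      have hv : v ∈ P.blk v u := hsub (h1 ▸ P.mem_self w v)
      have : P.blk v u = {v} := by
        rw [← P.self_blk v, P.eq_of_mem v u v hv]
      exact huv (by simpa [this] using P.mem_self v u)
  · intro h w hwu hwv
    -- compatibility of w and v
    have hcomp := P.compat w v hwv
    have hu : u ∈ P.blk v w ∪ P.blk w v := hcomp ▸ Set.mem_univ u
    rcases hu with hu | hu
    · -- u ∈ blk v w, so w ∈ blk v u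
      have hvw : P.blk v u = P.blk v w := P.eq_of_mem v w u hu
      have hwin : w ∈ P.blk v u := hvw ▸ P.mem_self v w
      -- v ∉ blk w u
      by_cases hvin : v ∈ P.blk w u
      · exact (P.eq_of_mem w u v hvin).symm
      · exfalso
        -- blk w u ⊆ blk v u
        have hsub : P.blk w u ⊆ P.blk v u := by
          intro x hx
          have hx' : x ∈ P.blk v w ∪ P.blk w v := hcomp ▸ Set.mem_univ x
          rcases hx' with hx' | hx'
          · exact hvw ▸ hx'
          · exfalso
            have e1 : P.blk w x = P.blk w v := P.eq_of_mem w v x hx'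
            have e2 : P.blk w x = P.blk w u := P.eq_of_mem w u x hx
            exact hvin (e2 ▸ e1 ▸ P.mem_self w v)
        have heq : P.blk w u = P.blk v u := h w hwu hsub
        have : w ∈ P.blk w u := heq ▸ hwin
        have : P.blk w u = {w} := by
          rw [← P.self_blk w, P.eq_of_mem w u w this]
        exact hwu.symm (by simpa [this] using P.mem_self w u)
    · exact P.eq_of_mem w v u hu
end

section
/- Let P = (p_v)_{v ∈ V} be a compatible family of V-partitions and u, v distinct elements of V. Then p_v[u] is a minimal element of {p_w[u] : w ∈ V − {u}} with respect to inclusion if and only if p_v[u] is a minimal element of the smaller collection {p_w[u] : w ∈ p_u[v]}. -/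
theorem minimal_iff_minimal_restricted {V : Type*} [Fintype V] (P : CompFam V) (u v : V)
    (huv : u ≠ v) :
    (∀ w : V, w ≠ u → P.blk w u ⊆ P.blk v u → P.blk w u = P.blk v u) ↔
      (∀ w : V, w ∈ P.blk u v → P.blk w u ⊆ P.blk v u → P.blk w u = P.blk v u) := by
  constructor
  · intro h w hw hsub
    apply h w _ hsub
    rintro rfl
    have h1 := P.eq_of_mem w v w hw
    rw [P.self_blk] at h1
    have : v ∈ ({w} : Set V) := h1 ▸ P.mem_self w v
    exact huv this.symm
  · intro h w hw hsub
    apply h w _ hsub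
    -- claim: w ∈ P.blk u v
    by_contra hwv
    -- then v ∈ P.blk w u, so v ∈ P.blk v u, so blk v u = blk v v = {v}, so u = v
    have hvw : v ∈ P.blk w u := by
      have := P.compat u w hw.symm
      rcases (Set.eq_univ_iff_forall.mp this v) with h1 | h1
      · exact h1
      · exact absurd ((P.eq_of_mem u w v h1) ▸ P.mem_self u w) hwv
    have hv : v ∈ P.blk v u := hsub hvw
    have : P.blk v u = {v} := by
      rw [← P.eq_of_mem v u v hv, P.self_blk]
    have : u ∈ ({v} : Set V) := this ▸ P.mem_self v u
    exact huv this
end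

section
/- Let P = (p_v)_{v ∈ V} be a compatible family of V-partitions and u, v, w three distinct elements of V with {u, w} ∈ E_P and {w, v} ∈ E_P. Then {u, v} ∈ E_P if and only if p_w[u] = p_w[v]. -/
theorem edge_iff_blk_eq {V : Type*} [Fintype V] (P : CompFam V) (u v w : V)
    (huv : u ≠ v) (huw : u ≠ w) (hvw : v ≠ w)
    (h1 : (BP P).Adj u w) (h2 : (BP P).Adj w v) :
    (BP P).Adj u v ↔ P.blk w u = P.blk w v := by
  constructor
  · intro h
    exact h.2 w (Ne.symm huw) (Ne.symm hvw)
  · intro hw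
    refine ⟨huv, fun x hxu hxv => ?_⟩
    by_cases hxw : x = w
    · subst hxw; exact hw
    · exact (h1.2 x hxu hxw).trans (h2.2 x hxw hxv)
end

section
/- Let P = (p_v)_{v ∈ V} be a compatible family of V-partitions, and let u, v be distinct elements of V. Suppose (u_0 = u, u_1, ..., u_n = v) is a sequence in V such that p_{u_1}[u] ⊊ p_{u_2}[u] ⊊ ... ⊊ p_{u_n}[u] = p_v[u] is a maximal chain in {p_w[u] : w ∈ V − {u}, p_w[u] ⊆ p_v[u]} ending with p_v[u]. Then {u_{i-1}, u_i} ∈ E_P for all i = 1, ..., n, i.e., the sequence forms a path from u to v in the graph B_P = (V, E_P). -/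
namespace CompFam
variable {V : Type*} (P : CompFam V)

lemma eq_self_of_mem {b u : V} (h : b ∈ P.blk b u) : u = b := by
  have h1 := P.eq_of_mem b u b h
  have : u ∈ ({b} : Set V) := by rw [← P.self_blk b, h1]; exact P.mem_self b u
  exact this

lemma dich (u w x : V) (hwx : w ≠ x) : w ∈ P.blk x u ∨ x ∈ P.blk w u := by
  have h := P.compat w x hwx
  have hu : u ∈ P.blk x w ∪ P.blk w x := h ▸ Set.mem_univ u
  rcases hu with h1 | h1
  · left; rw [P.eq_of_mem x w u h1]; exact P.mem_self x w
  · right; rw [P.eq_of_mem w x u h1]; exact P.mem_self w x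

lemma subset_of_not_mem {u w x : V} (hwx : w ≠ x) (h : w ∉ P.blk x u) :
    P.blk x u ⊆ P.blk w u := by
  have hx : x ∈ P.blk w u := (P.dich u w x hwx).resolve_left h
  intro y hy
  have hc := P.compat w x hwx
  have hy2 : y ∈ P.blk x w ∪ P.blk w x := hc ▸ Set.mem_univ y
  rcases hy2 with h1 | h1
  · exfalso; apply h
    have e1 := P.eq_of_mem x w y h1
    have e2 := P.eq_of_mem x u y hy
    rw [← e2, e1]; exact P.mem_self x w
  · rw [← P.eq_of_mem w u x hx]; exact h1

end CompFam

theorem maximal_chain_gives_path {V : Type*} [Fintype V] (P : CompFam V) (u v : V)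
    (huv : u ≠ v) (n : ℕ) (hn : 1 ≤ n) (c : ℕ → V) (h0 : c 0 = u) (hend : c n = v)
    (hmem : ∀ i, 1 ≤ i → i ≤ n → c i ≠ u ∧ P.blk (c i) u ⊆ P.blk v u)
    (hchain : ∀ i j, 1 ≤ i → i < j → j ≤ n → P.blk (c i) u ⊂ P.blk (c j) u)
    (hmax : ∀ w : V, w ≠ u → P.blk w u ⊆ P.blk v u →
      (∀ i, 1 ≤ i → i ≤ n → P.blk w u ⊆ P.blk (c i) u ∨ P.blk (c i) u ⊆ P.blk w u) →
      ∃ i, 1 ≤ i ∧ i ≤ n ∧ P.blk w u = P.blk (c i) u) :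
    ∀ i, 1 ≤ i → i ≤ n → (BP P).Adj (c (i - 1)) (c i) := by
  intro i hi1 hin
  set a := c (i - 1) with ha_def
  set b := c i with hb_def
  have hbu : b ≠ u := (hmem i hi1 hin).1
  have hBv : P.blk b u ⊆ P.blk v u := (hmem i hi1 hin).2
  have hbB : b ∉ P.blk b u := fun h => hbu (P.eq_self_of_mem h).symm
  -- A ⊆ B
  have hAsubB : P.blk a u ⊆ P.blk b u := by
    rcases eq_or_lt_of_le hi1 with h1 | h2
    · have : a = u := by rw [ha_def, ← h1]; simpa using h0
      rw [this, P.self_blk u]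
      intro y hy
      have hyu : y = u := hy
      rw [hyu]; exact P.mem_self b u
    · exact (hchain (i - 1) i (by omega) (by omega) hin).subset
  have hbA : b ∉ P.blk a u := fun h => hbB (hAsubB h)
  have hab : a ≠ b := by
    rcases eq_or_lt_of_le hi1 with h1 | h2
    · have ha_u : a = u := by rw [ha_def, ← h1]; simpa using h0
      rw [ha_u]; exact hbu.symm
    · intro h
      exact (hchain (i - 1) i (by omega) (by omega) hin).ne
        (congrArg (fun x => P.blk x u) h)
  have haB : a ∈ P.blk b u := (P.dich u b a hab.symm).resolve_left hbA
  refine ⟨hab, ?_⟩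
  intro w hwa hwb
  by_cases hwu : w = u
  · -- case w = u : show blk u a = blk u b
    subst hwu
    have hb2 : b ∈ P.blk a w ∪ P.blk w a := (P.compat w a hwa) ▸ Set.mem_univ b
    rcases hb2 with h1 | h1
    · exact absurd h1 hbA
    · exact (P.eq_of_mem w a b h1).symm
  · by_cases hwB : w ∈ P.blk b u
    · by_cases hwA : w ∈ P.blk a u
      · -- w ∈ A: show b ∈ blk w a
        have hb2 : b ∈ P.blk w a ∪ P.blk a w := (P.compat a w (fun h => hwa h.symm)) ▸ Set.mem_univ b
        rcases hb2 with h1 | h1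
        · exact (P.eq_of_mem w a b h1).symm
        · exfalso
          have e1 := P.eq_of_mem a w b h1
          have e2 := P.eq_of_mem a u w hwA
          exact hbA (by rw [← e2, ← e1]; exact P.mem_self a b)
      · have haW : a ∈ P.blk w u := (P.dich u w a hwa).resolve_left hwA
        by_cases hbW : b ∈ P.blk w u
        · rw [P.eq_of_mem w u a haW, P.eq_of_mem w u b hbW]
        · -- final case: contradiction via maximality
          exfalso
          have hWB : P.blk w u ⊆ P.blk b u := P.subset_of_not_mem hwb.symm hbW
          have hAW : P.blk a u ⊆ P.blk w u := P.subset_of_not_mem hwa hwA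
          have hwW : w ∉ P.blk w u := fun h => hwu (P.eq_self_of_mem h).symm
          have hcomp : ∀ j, 1 ≤ j → j ≤ n →
              P.blk w u ⊆ P.blk (c j) u ∨ P.blk (c j) u ⊆ P.blk w u := by
            intro j hj1 hjn
            rcases le_or_gt i j with hij | hij
            · left
              rcases eq_or_lt_of_le hij with rfl | hlt
              · exact hWB
              · exact hWB.trans (hchain i j hi1 hlt hjn).subset
            · right
              have hji : j ≤ i - 1 := by omega
              have hsub : P.blk (c j) u ⊆ P.blk a u := by
                rcases eq_or_lt_of_le hji with rfl | hlt
                · exact le_refl _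
                · exact (hchain j (i - 1) hj1 hlt (by omega)).subset
              exact hsub.trans hAW
          obtain ⟨j, hj1, hjn, hWj⟩ := hmax w hwu (hWB.trans hBv) hcomp
          rcases le_or_gt i j with hij | hij
          · -- B ⊆ blk (c j) u = W, but w ∈ B, w ∉ W
            have hBW : P.blk b u ⊆ P.blk w u := by
              rcases eq_or_lt_of_le hij with rfl | hlt
              · exact le_of_eq hWj.symm
              · exact (hchain i j hi1 hlt hjn).subset.trans (le_of_eq hWj.symm)
            exact hwW (hBW hwB)
          · -- j ≤ i - 1: W ⊆ A, but a ∈ W, a ∉ A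
            have hau : a ≠ u := (hmem (i - 1) (by omega) (by omega)).1
            have haA : a ∉ P.blk a u := fun h => hau (P.eq_self_of_mem h).symm
            have hWA : P.blk w u ⊆ P.blk a u := by
              have hji : j ≤ i - 1 := by omega
              rcases eq_or_lt_of_le hji with rfl | hlt
              · exact le_of_eq hWj
              · exact (le_of_eq hWj).trans (hchain j (i - 1) hj1 hlt (by omega)).subset
            exact haA (hWA haW)
    · -- w ∉ B: show a ∈ blk w b
      have ha2 : a ∈ P.blk w b ∪ P.blk b w := (P.compat b w (fun h => hwb h.symm)) ▸ Set.mem_univ a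
      rcases ha2 with h1 | h1
      · exact P.eq_of_mem w b a h1
      · exfalso
        have e1 := P.eq_of_mem b w a h1
        have e2 := P.eq_of_mem b u a haB
        exact hwB (by rw [← e2, e1]; exact P.mem_self b w)
end

section
/- For every compatible family P = (p_v)_{v ∈ V} of V-partitions, the graph B_P = (V, E_P) is connected. -/
/-- The set of vertices separating `u` from `v`. -/
def sep {V : Type*} (P : CompFam V) (u v : V) : Set V :=
  {w : V | w ≠ u ∧ w ≠ v ∧ u ∉ P.blk w v}

lemma mem_iff_mem {V : Type*} (P : CompFam V) (w u v : V) :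
    u ∈ P.blk w v ↔ v ∈ P.blk w u := by
  constructor <;> intro h
  · rw [P.eq_of_mem w v u h]; exact P.mem_self w v
  · rw [P.eq_of_mem w u v h]; exact P.mem_self w u

lemma sep_symm {V : Type*} (P : CompFam V) (u v : V) : sep P u v = sep P v u := by
  ext w
  simp only [sep, Set.mem_setOf_eq, mem_iff_mem P w]
  tauto

lemma sep_subset {V : Type*} (P : CompFam V) {u v w : V} (hw : w ∈ sep P u v) :
    sep P u w ⊆ sep P u v := by
  obtain ⟨hwu, hwv, hblk⟩ := hw
  rintro z ⟨hzu, hzw, hz⟩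
  have hzv : z ≠ v := by
    rintro rfl
    have := P.compat w z hwv.symm.symm
    have : u ∈ P.blk z w ∪ P.blk w z := by rw [this]; trivial
    rcases this with h | h
    · exact hz h
    · exact hblk h
  refine ⟨hzu, hzv, fun huzv => ?_⟩
  -- suppose u ∈ blk z v
  have hzuv : P.blk z u = P.blk z v := P.eq_of_mem z v u huzv
  have hwzu : w ∉ P.blk z u := fun h => hz ((mem_iff_mem P z w u).mp h)
  have hwzv : w ∉ P.blk z v := hzuv ▸ hwzu
  have hvzw : v ∉ P.blk z w := fun h => hwzv ((mem_iff_mem P z v w).mp h)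
  have hcomp := P.compat z w hzw
  have hv : v ∈ P.blk w z ∪ P.blk z w := by rw [hcomp]; trivial
  have hvwz : v ∈ P.blk w z := hv.resolve_right hvzw
  have hu : u ∈ P.blk w z ∪ P.blk z w := by rw [hcomp]; trivial
  have huwz : u ∈ P.blk w z := hu.resolve_right hz
  have : P.blk w v = P.blk w z := P.eq_of_mem w z v hvwz
  exact hblk (this ▸ huwz)

lemma sep_not_mem_self {V : Type*} (P : CompFam V) (u w : V) : w ∉ sep P u w :=
  fun h => h.2.1 rfl

lemma reachable_aux {V : Type*} [Fintype V] (P : CompFam V) :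
    ∀ n (u v : V), (sep P u v).ncard = n → (BP P).Reachable u v := by
  intro n
  induction n using Nat.strong_induction_on with
  | _ n ih =>
    intro u v hcard
    by_cases huv : u = v
    · exact huv ▸ SimpleGraph.Reachable.refl u
    by_cases hsep : sep P u v = ∅
    · refine SimpleGraph.Adj.reachable ⟨huv, fun w h1 h2 => ?_⟩
      by_cases hm : u ∈ P.blk w v
      · exact P.eq_of_mem w v u hm
      · exact (Set.eq_empty_iff_forall_notMem.mp hsep w ⟨h1, h2, hm⟩).elim
    · obtain ⟨w, hw⟩ := Set.nonempty_iff_ne_empty.mpr hsep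
      have hfin : (sep P u v).Finite := Set.toFinite _
      have h1 : sep P u w ⊆ sep P u v := sep_subset P hw
      have h1' : sep P u w ⊂ sep P u v :=
        ⟨h1, fun hle => sep_not_mem_self P u w (hle hw)⟩
      have hw' : w ∈ sep P v u := (sep_symm P u v) ▸ hw
      have h2 : sep P w v ⊆ sep P u v := by
        rw [sep_symm P w v, sep_symm P u v]
        exact sep_subset P hw'
      have h2' : sep P w v ⊂ sep P u v := by
        refine ⟨h2, fun hle => ?_⟩
        have : w ∈ sep P w v := hle hw
        exact this.1 rfl
      have hc1 : (sep P u w).ncard < n := hcard ▸ Set.ncard_lt_ncard h1' hfin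
      have hc2 : (sep P w v).ncard < n := hcard ▸ Set.ncard_lt_ncard h2' hfin
      exact (ih _ hc1 u w rfl).trans (ih _ hc2 w v rfl)

theorem BP_connected {V : Type*} [Fintype V] [Nonempty V] (P : CompFam V) :
    (BP P).Connected := by
  rw [SimpleGraph.connected_iff]
  exact ⟨fun u v => reachable_aux P _ u v rfl, ‹_›⟩
end

section
/- For every compatible family P = (p_v)_{v ∈ V} of V-partitions and every v ∈ V, the set of connected components of the graph B_P^(v) (obtained from B_P by deleting all edges incident to v) is exactly the partition p_v; that is, for all distinct u, v ∈ V, the connected component of u in B_P^(v) equals p_v[u]. -/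
section Aux
variable {V : Type*}

lemma blk_disj {P : CompFam V} {w a b x : V} (h : P.blk w a ≠ P.blk w b)
    (hx : x ∈ P.blk w a) : x ∉ P.blk w b := fun hx' =>
  h ((P.eq_of_mem w a x hx).symm.trans (P.eq_of_mem w b x hx'))

lemma mem_of_not_mem {P : CompFam V} {b w x : V} (hbw : b ≠ w)
    (h : x ∉ P.blk w b) : x ∈ P.blk b w := by
  have hu := P.compat b w hbw
  have hx : x ∈ P.blk w b ∪ P.blk b w := by rw [hu]; exact Set.mem_univ x
  exact hx.resolve_left h

lemma v_not_mem {P : CompFam V} {v a : V} (h : a ≠ v) : v ∉ P.blk v a := by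
  intro hv
  have he := P.eq_of_mem v a v hv
  have ha := P.mem_self v a
  rw [← he, P.self_blk] at ha
  exact h ha

lemma sep_step {P : CompFam V} {a b w : V} (hwa : w ≠ a) (hwb : w ≠ b)
    (hsep : P.blk w a ≠ P.blk w b) :
    w ∈ P.blk a b ∩ P.blk b a ∧
    P.blk a w ∩ P.blk w a ⊆ P.blk a b ∩ P.blk b a ∧
    w ∉ P.blk a w ∩ P.blk w a := by
  have hab : a ≠ b := fun h => hsep (by rw [h])
  have hbwa : b ∉ P.blk w a := fun hb => hsep (P.eq_of_mem w a b hb).symm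
  have hawb : a ∉ P.blk w b := fun ha => hsep (P.eq_of_mem w b a ha)
  have hb_aw : b ∈ P.blk a w := mem_of_not_mem hwa.symm hbwa
  have ha_bw : a ∈ P.blk b w := mem_of_not_mem hwb.symm hawb
  have e1 : P.blk a b = P.blk a w := P.eq_of_mem a w b hb_aw
  have e2 : P.blk b a = P.blk b w := P.eq_of_mem b w a ha_bw
  refine ⟨⟨by rw [e1]; exact P.mem_self a w, by rw [e2]; exact P.mem_self b w⟩, ?_, ?_⟩
  · rintro x ⟨hx1, hx2⟩
    refine ⟨by rw [e1]; exact hx1, ?_⟩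
    have hxwb : x ∉ P.blk w b := blk_disj hsep hx2
    have hxbw : x ∈ P.blk b w := mem_of_not_mem hwb.symm hxwb
    rw [e2]; exact hxbw
  · rintro ⟨_, hx2⟩
    have he := P.eq_of_mem w a w hx2
    have ha := P.mem_self w a
    rw [← he, P.self_blk] at ha
    exact hwa ha.symm

lemma blk_eq_of_adj {P : CompFam V} {v a b : V} (h : (delV (BP P) v).Adj a b) :
    P.blk v a = P.blk v b := h.1.2 v h.2.1.symm h.2.2.symm

lemma blk_eq_of_reachable {P : CompFam V} {v u x : V}
    (h : (delV (BP P) v).Reachable u x) : P.blk v x = P.blk v u := by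
  obtain ⟨w⟩ := h
  induction w with
  | nil => rfl
  | cons h p ih => rw [ih]; exact (blk_eq_of_adj h).symm

lemma reach_main [Fintype V] (P : CompFam V) (v : V) :
    ∀ n : ℕ, ∀ a b : V, a ≠ v → b ∈ P.blk v a →
      (P.blk a b ∩ P.blk b a).ncard < n → (delV (BP P) v).Reachable a b := by
  intro n
  induction n with
  | zero => intro a b _ _ h; exact absurd h (Nat.not_lt_zero _)
  | succ n ih =>
    intro a b hav hb hcard
    by_cases hab : a = b
    · subst hab; exact SimpleGraph.Reachable.refl a
    by_cases hsep : ∃ w, w ≠ a ∧ w ≠ b ∧ P.blk w a ≠ P.blk w b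
    · obtain ⟨w, hwa, hwb, hne⟩ := hsep
      have hbv : P.blk v b = P.blk v a := P.eq_of_mem v a b hb
      have hwv : w ≠ v := fun h => hne (by rw [h, hbv])
      have hwva : w ∈ P.blk v a := by
        by_contra hw
        have h1 : a ∉ P.blk v w := fun ha =>
          hw (by rw [P.eq_of_mem v w a ha]; exact P.mem_self v w)
        have h2 : b ∉ P.blk v w := fun hbw =>
          hw (by rw [← hbv, P.eq_of_mem v w b hbw]; exact P.mem_self v w)
        have e1 := P.eq_of_mem w v a (mem_of_not_mem hwv h1)
        have e2 := P.eq_of_mem w v b (mem_of_not_mem hwv h2)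
        exact hne (e1.trans e2.symm)
      obtain ⟨hwS, hsub, hwnS⟩ := sep_step hwa hwb hne
      obtain ⟨hwS', hsub', hwnS'⟩ := sep_step hwb hwa hne.symm
      have hfin : (P.blk a b ∩ P.blk b a).Finite := Set.toFinite _
      have lt1 : (P.blk a w ∩ P.blk w a).ncard < (P.blk a b ∩ P.blk b a).ncard :=
        Set.ncard_lt_ncard
          (hsub.ssubset_of_ne (fun h => hwnS (by rw [h]; exact hwS))) hfin
      have hfin' : (P.blk b a ∩ P.blk a b).Finite := Set.toFinite _
      have lt2 : (P.blk b w ∩ P.blk w b).ncard < (P.blk b a ∩ P.blk a b).ncard :=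
        Set.ncard_lt_ncard
          (hsub'.ssubset_of_ne (fun h => hwnS' (by rw [h]; exact hwS'))) hfin'
      rw [Set.inter_comm (P.blk b a)] at lt2
      have r1 : (delV (BP P) v).Reachable a w := by
        refine ih a w hav hwva ?_
        omega
      have hbw' : b ∈ P.blk v w := by
        rw [P.eq_of_mem v a w hwva]; exact hb
      have r2 : (delV (BP P) v).Reachable w b := by
        refine ih w b hwv hbw' ?_
        rw [Set.inter_comm (P.blk w b)]
        omega
      exact r1.trans r2
    · push_neg at hsep
      have hbv : b ≠ v := fun h => v_not_mem hav (h ▸ hb)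
      exact SimpleGraph.Adj.reachable
        ⟨⟨hab, fun w h1 h2 => hsep w h1 h2⟩, hav, hbv⟩

end Aux

theorem components_of_BP_delete {V : Type*} [Fintype V] (P : CompFam V) :
    ∀ u v : V, u ≠ v → {x | (delV (BP P) v).Reachable u x} = P.blk v u := by
  intro u v huv
  ext x
  simp only [Set.mem_setOf_eq]
  constructor
  · intro h
    have he := blk_eq_of_reachable h
    rw [← he]; exact P.mem_self v x
  · intro hx
    exact reach_main P v ((P.blk u x ∩ P.blk x u).ncard + 1) u x huv hx
      (Nat.lt_succ_self _)
end
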